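/- Let $0 < p < \infty$, let $y \in \mathbb{R}^n$ with $|y| > 10e$, and let $\eta$ be a nonnegative Schwartz function with $\eta(x) \ge c > 0$ for $|x| \le 1/100$. For integers $1 \le m \le \ln(e+|y|)$, the balls $B_m := \{x : |x - 2^{-m} y| \le 1/100\}$ are pairwise disjoint, and consequently $\big\|\sup_{1 \le k \le \ln(e+|y|)} \eta(\cdot - 2^{-k} y)\big\|_{L^p(\mathbb{R}^n)} \ge c' \,(\ln(e+|y|))^{1/p}$ for a constant $c' > 0$ depending only on $c$, $n$, $p$. -/

import Mathlib

open Real MeasureTheory ENNReal NNReal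

/-- the balls `B_m = {|x - 2^{-m} y| ≤ 1/100}`, `1 ≤ m ≤ ln(e+|y|)`, are
pairwise disjoint, and the `L^p` norm of `sup_{1 ≤ k ≤ ln(e+|y|)} η(· - 2^{-k} y)` is at
least `c' (ln(e+|y|))^{1/p}` when `η ≥ c > 0` on the ball of radius `1/100`. -/
theorem disjoint_balls_sup_lower_bound (n : ℕ) (p c : ℝ) (hp : 0 < p) (hc : 0 < c) :
    ∃ c' : ℝ, 0 < c' ∧ ∀ (y : EuclideanSpace ℝ (Fin n)) (η : EuclideanSpace ℝ (Fin n) → ℝ),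
      ‖y‖ > 10 * Real.exp 1 → (∀ x, 0 ≤ η x) → (∀ x, ‖x‖ ≤ 1 / 100 → c ≤ η x) →
      ((∀ m ∈ Finset.Icc 1 ⌊Real.log (Real.exp 1 + ‖y‖)⌋₊,
          ∀ m' ∈ Finset.Icc 1 ⌊Real.log (Real.exp 1 + ‖y‖)⌋₊, m ≠ m' →
          Disjoint (Metric.closedBall ((2 : ℝ) ^ (-(m : ℤ)) • y) (1 / 100))
            (Metric.closedBall ((2 : ℝ) ^ (-(m' : ℤ)) • y) (1 / 100))) ∧
        ENNReal.ofReal (c' * Real.log (Real.exp 1 + ‖y‖) ^ (1 / p))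
          ≤ eLpNorm
              (fun x => ⨆ k ∈ Finset.Icc 1 ⌊Real.log (Real.exp 1 + ‖y‖)⌋₊,
                η (x - (2 : ℝ) ^ (-(k : ℤ)) • y))
              (ENNReal.ofReal p) volume) := by
  set v : ℝ≥0∞ := volume (Metric.closedBall (0 : EuclideanSpace ℝ (Fin n)) (1/100)) with hv
  have hvpos : 0 < v := Metric.measure_closedBall_pos _ _ (by norm_num)
  have hvlt : v < ⊤ := measure_closedBall_lt_top
  set w : ℝ := min v.toReal 1 with hwdef
  have hwpos : 0 < w := lt_min (ENNReal.toReal_pos hvpos.ne' hvlt.ne) one_pos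
  refine ⟨c * (w / 2) ^ (1 / p), by positivity, fun y η hy hη0 hηc => ?_⟩
  set L' : ℝ := Real.log (Real.exp 1 + ‖y‖) with hL'def
  set L : ℕ := ⌊L'⌋₊ with hLdef
  have he1 : (0:ℝ) < Real.exp 1 := Real.exp_pos 1
  have hy0 : (0:ℝ) < ‖y‖ := lt_trans (by positivity) hy
  have hL'2 : (2:ℝ) ≤ L' := by
    rw [hL'def, ← Real.log_exp 2]
    apply Real.log_le_log (Real.exp_pos 2)
    have h3 : Real.exp 1 < 3 := by
      have := Real.exp_one_lt_d9; linarith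
    have h2 : Real.exp 2 = Real.exp 1 * Real.exp 1 := by
      rw [← Real.exp_add]; norm_num
    nlinarith [Real.exp_pos 1]
  have hL'0 : (0:ℝ) ≤ L' := by linarith
  have hL2 : 2 ≤ L := Nat.le_floor (by exact_mod_cast hL'2)
  have hL1 : 1 ≤ L := le_trans one_le_two hL2
  have hLle : (L:ℝ) ≤ L' := Nat.floor_le hL'0
  have hL'le : L' ≤ 2 * L := by
    have h1 := Nat.lt_floor_add_one L'
    have h2 : (1:ℝ) ≤ (L:ℝ) := by exact_mod_cast hL1
    rw [← hLdef] at h1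
    linarith
  -- key power bound
  have h2L : (2:ℝ) ^ (L:ℕ) ≤ Real.exp 1 + ‖y‖ := by
    have hlog2 : Real.log 2 < 1 := by
      have := Real.log_two_lt_d9; linarith
    have e1 : ((2:ℝ) ^ (L:ℕ)) = Real.exp ((L:ℝ) * Real.log 2) := by
      rw [← Real.rpow_natCast 2 L, Real.rpow_def_of_pos two_pos, mul_comm]
    rw [e1, ← Real.exp_log (show (0:ℝ) < Real.exp 1 + ‖y‖ by positivity)]
    apply Real.exp_le_exp.mpr
    have hL0 : (0:ℝ) ≤ (L:ℝ) := by positivity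
    nlinarith
  have hpow : (10:ℝ)/11 ≤ (2:ℝ) ^ (-(L:ℤ)) * ‖y‖ := by
    have h1 : (0:ℝ) < (2:ℝ) ^ (L:ℕ) := by positivity
    rw [show (-(L:ℤ)) = -((L:ℕ):ℤ) from rfl, zpow_neg, zpow_natCast, inv_mul_eq_div,
      le_div_iff₀ h1]
    nlinarith
  -- disjointness
  have key : ∀ m m' : ℕ, m ∈ Finset.Icc 1 L → m' ∈ Finset.Icc 1 L → m < m' →
      Disjoint (Metric.closedBall ((2 : ℝ) ^ (-(m : ℤ)) • y) (1 / 100))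
        (Metric.closedBall ((2 : ℝ) ^ (-(m' : ℤ)) • y) (1 / 100)) := by
    intro m m' hm hm' hlt
    apply Metric.closedBall_disjoint_closedBall
    rw [dist_eq_norm, ← sub_smul, norm_smul, Real.norm_eq_abs]
    have hmL : m ≤ L := (Finset.mem_Icc.mp hm).2
    have h1 : (2:ℝ) ^ (-(m':ℤ)) ≤ (2:ℝ) ^ (-(m:ℤ) - 1) :=
      zpow_le_zpow_right₀ one_le_two (by omega)
    have h2 : (2:ℝ) ^ (-(L:ℤ) - 1) ≤ (2:ℝ) ^ (-(m:ℤ) - 1) :=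
      zpow_le_zpow_right₀ one_le_two (by omega)
    have h3 : (2:ℝ) ^ (-(L:ℤ) - 1) = (2:ℝ) ^ (-(L:ℤ)) * 2⁻¹ := zpow_sub_one₀ two_ne_zero _
    have h4 : (2:ℝ) ^ (-(m:ℤ) - 1) = (2:ℝ) ^ (-(m:ℤ)) * 2⁻¹ := zpow_sub_one₀ two_ne_zero _
    have h5 : (0:ℝ) < (2:ℝ) ^ (-(m':ℤ)) := by positivity
    have habs : |(2:ℝ) ^ (-(m:ℤ)) - (2:ℝ) ^ (-(m':ℤ))| =
        (2:ℝ) ^ (-(m:ℤ)) - (2:ℝ) ^ (-(m':ℤ)) := by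
      apply abs_of_nonneg; nlinarith
    rw [habs]
    nlinarith
  have hdisj : ∀ m ∈ Finset.Icc 1 L, ∀ m' ∈ Finset.Icc 1 L, m ≠ m' →
      Disjoint (Metric.closedBall ((2 : ℝ) ^ (-(m : ℤ)) • y) (1 / 100))
        (Metric.closedBall ((2 : ℝ) ^ (-(m' : ℤ)) • y) (1 / 100)) := by
    intro m hm m' hm' hne
    rcases hne.lt_or_gt with h | h
    · exact key m m' hm hm' h
    · exact (key m' m hm' hm h).symm
  refine ⟨hdisj, ?_⟩
  have hq0 : (ENNReal.ofReal p) ≠ 0 := by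
    simp [ENNReal.ofReal_eq_zero, not_le, hp]
  rw [eLpNorm_eq_lintegral_rpow_enorm_toReal hq0 ENNReal.ofReal_ne_top, ENNReal.toReal_ofReal hp.le]
  set F : EuclideanSpace ℝ (Fin n) → ℝ :=
    fun x => ⨆ k ∈ Finset.Icc 1 L, η (x - (2:ℝ) ^ (-(k:ℤ)) • y) with hF
  set S : Set (EuclideanSpace ℝ (Fin n)) :=
    ⋃ m ∈ Finset.Icc 1 L, Metric.closedBall ((2:ℝ) ^ (-(m:ℤ)) • y) (1/100) with hS
  have hSmeas : MeasurableSet S :=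
    MeasurableSet.biUnion (Finset.Icc 1 L).countable_toSet
      (fun m _ => measurableSet_closedBall)
  have hSvol : volume S = (L : ℝ≥0∞) * v := by
    rw [hS, measure_biUnion_finset (fun m hm m' hm' hne =>
        hdisj m (Finset.mem_coe.mp hm) m' (Finset.mem_coe.mp hm') hne)
      (fun m _ => measurableSet_closedBall)]
    have : ∀ m ∈ Finset.Icc 1 L,
        volume (Metric.closedBall ((2:ℝ) ^ (-(m:ℤ)) • y) (1/100)) = v := by
      intro m _
      rw [hv]
      exact Measure.addHaar_closedBall_center volume _ _
    rw [Finset.sum_congr rfl this, Finset.sum_const, Nat.card_Icc]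
    simp [nsmul_eq_mul]
  have hFc : ∀ x ∈ S, c ≤ F x := by
    intro x hx
    obtain ⟨m, hm, hxm⟩ := Set.mem_iUnion₂.mp hx
    have hbdd : BddAbove (Set.range fun k =>
        ⨆ _ : k ∈ Finset.Icc 1 L, η (x - (2:ℝ) ^ (-(k:ℤ)) • y)) := by
      apply Set.Finite.bddAbove
      refine Set.Finite.subset (Set.Finite.insert (0:ℝ)
        (((Finset.Icc 1 L).image fun (k : ℕ) => η (x - (2:ℝ) ^ (-(k:ℤ)) • y)) : Finset ℝ).finite_toSet) ?_
      rintro z ⟨k, rfl⟩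
      show (⨆ _ : k ∈ Finset.Icc 1 L, η (x - (2:ℝ) ^ (-(k:ℤ)) • y)) ∈
        insert (0:ℝ) ((((Finset.Icc 1 L).image fun (k : ℕ) => η (x - (2:ℝ) ^ (-(k:ℤ)) • y)) : Finset ℝ) : Set ℝ)
      by_cases hk : k ∈ Finset.Icc 1 L
      · rw [ciSup_pos hk]
        exact Set.mem_insert_of_mem _ (Finset.mem_coe.mpr (Finset.mem_image_of_mem _ hk))
      · rw [ciSup_neg hk, Real.sSup_empty]
        exact Set.mem_insert _ _
    have h1 : c ≤ η (x - (2:ℝ) ^ (-(m:ℤ)) • y) := by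
      apply hηc
      rw [← dist_eq_norm]
      exact Metric.mem_closedBall.mp hxm
    calc c ≤ η (x - (2:ℝ) ^ (-(m:ℤ)) • y) := h1
      _ = ⨆ _ : m ∈ Finset.Icc 1 L, η (x - (2:ℝ) ^ (-(m:ℤ)) • y) :=
          (ciSup_pos (f := fun _ => η (x - (2:ℝ) ^ (-(m:ℤ)) • y)) hm).symm
      _ ≤ F x := le_ciSup hbdd m
  have hlint : ENNReal.ofReal c ^ p * ((L : ℝ≥0∞) * v)
      ≤ ∫⁻ x, (‖F x‖₊ : ℝ≥0∞) ^ p := by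
    rw [← hSvol]
    calc ENNReal.ofReal c ^ p * volume S
        = ∫⁻ x, S.indicator (fun _ => ENNReal.ofReal c ^ p) x := by
          rw [lintegral_indicator_const hSmeas]
      _ ≤ ∫⁻ x, (‖F x‖₊ : ℝ≥0∞) ^ p := by
          apply lintegral_mono
          intro x
          by_cases hx : x ∈ S
          · rw [Set.indicator_of_mem hx]
            refine ENNReal.rpow_le_rpow ?_ hp.le
            exact le_trans (ENNReal.ofReal_le_ofReal (hFc x hx)) (Real.ofReal_le_enorm _)
          · rw [Set.indicator_of_notMem hx]
            exact zero_le
  have hmid : ENNReal.ofReal (w / 2 * L') ≤ (L : ℝ≥0∞) * v := by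
    have h1 : w / 2 * L' ≤ ENNReal.toReal v * (L : ℝ) := by
      have hwv : w ≤ v.toReal := min_le_left _ _
      have hL0 : (0:ℝ) ≤ (L:ℝ) := Nat.cast_nonneg _
      nlinarith
    calc ENNReal.ofReal (w / 2 * L') ≤ ENNReal.ofReal (ENNReal.toReal v * (L : ℝ)) :=
          ENNReal.ofReal_le_ofReal h1
      _ = v * (L : ℝ≥0∞) := by
          rw [ENNReal.ofReal_mul ENNReal.toReal_nonneg, ENNReal.ofReal_toReal hvlt.ne,
            ENNReal.ofReal_natCast]
      _ = (L : ℝ≥0∞) * v := mul_comm _ _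
  calc ENNReal.ofReal (c * (w / 2) ^ (1 / p) * L' ^ (1 / p))
      = ENNReal.ofReal c * ENNReal.ofReal ((w / 2 * L') ^ (1 / p)) := by
        rw [mul_assoc, ← Real.mul_rpow (by positivity) (by linarith),
          ENNReal.ofReal_mul hc.le]
    _ = ENNReal.ofReal c * (ENNReal.ofReal (w / 2 * L')) ^ (1 / p) := by
        rw [← ENNReal.ofReal_rpow_of_nonneg (by positivity) (by positivity)]
    _ ≤ ENNReal.ofReal c * ((L : ℝ≥0∞) * v) ^ (1 / p) := by
        gcongr
    _ = (ENNReal.ofReal c ^ p * ((L : ℝ≥0∞) * v)) ^ (1 / p) := by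
        rw [ENNReal.mul_rpow_of_nonneg (ENNReal.ofReal c ^ p) ((L : ℝ≥0∞) * v)
            (by positivity : (0:ℝ) ≤ 1/p),
          ← ENNReal.rpow_mul, mul_one_div_cancel hp.ne', ENNReal.rpow_one]
    _ ≤ (∫⁻ x, (‖F x‖₊ : ℝ≥0∞) ^ p) ^ (1 / p) := ENNReal.rpow_le_rpow hlint (by positivity)
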